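/- For all integers n ≥ 1 and N with 3N ≥ 5n + 6, every 2-coloring of the Boolean lattice Q_N contains a red copy of Q_2 or a blue copy of Q_n. (Equivalently, the poset Ramsey number satisfies R(Q_2, Q_n) ≤ (5/3)n + 2.) -/

import Mathlib

/-- A red copy of the Boolean lattice `Q m` inside the 2-colored Boolean lattice `Q N`,
where `c S = true` means `S` is red and `c S = false` means `S` is blue. -/
def HasRedCopy (m N : ℕ) (c : Finset (Fin N) → Bool) : Prop :=
  ∃ f : Finset (Fin m) → Finset (Fin N),
    Function.Injective f ∧
    (∀ S T : Finset (Fin m), S ⊆ T ↔ f S ⊆ f T) ∧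
    (∀ S : Finset (Fin m), c (f S) = true)

/-- A blue copy of the Boolean lattice `Q m` inside the 2-colored Boolean lattice `Q N`. -/
def HasBlueCopy (m N : ℕ) (c : Finset (Fin N) → Bool) : Prop :=
  ∃ f : Finset (Fin m) → Finset (Fin N),
    Function.Injective f ∧
    (∀ S T : Finset (Fin m), S ⊆ T ↔ f S ⊆ f T) ∧
    (∀ S : Finset (Fin m), c (f S) = false)

namespace RQ2

lemma inj_of_iff {m N : ℕ} {f : Finset (Fin m) → Finset (Fin N)}
    (hiff : ∀ S T : Finset (Fin m), S ⊆ T ↔ f S ⊆ f T) : Function.Injective f := by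
  intro S T h
  exact subset_antisymm ((hiff S T).2 h.le) ((hiff T S).2 h.ge)

lemma quadFin2 : ∀ S : Finset (Fin 2), S = ∅ ∨ S = {0} ∨ S = {1} ∨ S = {0, 1} := by decide

/-- Build a red copy of Q₂ from a "diamond" of four red sets. -/
lemma mkRedQ2 {N : ℕ} {c : Finset (Fin N) → Bool} {A B C D : Finset (Fin N)}
    (hAB : A ⊆ B) (hAC : A ⊆ C) (hBD : B ⊆ D) (hCD : C ⊆ D)
    (hBC : ¬ B ⊆ C) (hCB : ¬ C ⊆ B)
    (rA : c A = true) (rB : c B = true) (rC : c C = true) (rD : c D = true) :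
    HasRedCopy 2 N c := by
  classical
  have hAD : A ⊆ D := hAB.trans hBD
  have hDB : ¬ D ⊆ B := fun h => hCB (hCD.trans h)
  have hDC : ¬ D ⊆ C := fun h => hBC (hBD.trans h)
  have hBA : ¬ B ⊆ A := fun h => hBC (h.trans hAC)
  have hCA : ¬ C ⊆ A := fun h => hCB (h.trans hAB)
  have hDA : ¬ D ⊆ A := fun h => hDB (h.trans hAB)
  set f : Finset (Fin 2) → Finset (Fin N) :=
    fun S => if S = ∅ then A else if S = {0} then B else if S = {1} then C else D with hf
  have e0 : f ∅ = A := by simp [hf]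
  have e1 : f {0} = B := by
    simp [hf]
  have e2 : f {1} = C := by
    simp [hf]
  have e3 : f {0, 1} = D := by
    simp only [hf]
    rw [if_neg (show ¬({0, 1} : Finset (Fin 2)) = ∅ by decide)]
    rw [if_neg (show ¬({0, 1} : Finset (Fin 2)) = {0} by decide)]
    rw [if_neg (show ¬({0, 1} : Finset (Fin 2)) = {1} by decide)]
  have hiff : ∀ S T : Finset (Fin 2), S ⊆ T ↔ f S ⊆ f T := by
    intro S T
    rcases quadFin2 S with h1 | h1 | h1 | h1 <;> rcases quadFin2 T with h2 | h2 | h2 | h2 <;>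
        subst h1 <;> subst h2 <;>
      simp only [e0, e1, e2, e3]
    · exact iff_of_true (by decide) subset_rfl
    · exact iff_of_true (by decide) hAB
    · exact iff_of_true (by decide) hAC
    · exact iff_of_true (by decide) hAD
    · exact iff_of_false (by decide) hBA
    · exact iff_of_true (by decide) subset_rfl
    · exact iff_of_false (by decide) hBC
    · exact iff_of_true (by decide) hBD
    · exact iff_of_false (by decide) hCA
    · exact iff_of_false (by decide) hCB
    · exact iff_of_true (by decide) subset_rfl
    · exact iff_of_true (by decide) hCD
    · exact iff_of_false (by decide) hDA
    · exact iff_of_false (by decide) hDB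
    · exact iff_of_false (by decide) hDC
    · exact iff_of_true (by decide) subset_rfl
  refine ⟨f, inj_of_iff hiff, hiff, ?_⟩
  intro S
  rcases quadFin2 S with h | h | h | h <;> subst h <;>
    simp only [e0, e1, e2, e3] <;> assumption

section Val
variable {N : ℕ}

/-- binary (colex) value of a finset -/
def val (A : Finset (Fin N)) : ℕ := ∑ y ∈ A, 2 ^ (y : ℕ)

lemma sum_range_pow2 (m : ℕ) : ∑ i ∈ Finset.range m, 2 ^ i = 2 ^ m - 1 := by
  induction m with
  | zero => simp
  | succ k ih => rw [Finset.sum_range_succ, ih]; have := Nat.one_le_two_pow (n := k); omega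

lemma val_lt {A : Finset (Fin N)} {y : Fin N} (h : ∀ a ∈ A, a < y) : val A < 2 ^ (y : ℕ) := by
  have h1 : val A = ∑ i ∈ A.image (Fin.val), 2 ^ i :=
    (Finset.sum_image (fun a _ b _ hab => Fin.val_injective hab)).symm
  have h2 : A.image (Fin.val) ⊆ Finset.range (y : ℕ) := by
    intro i hi
    simp only [Finset.mem_image] at hi
    obtain ⟨a, ha, rfl⟩ := hi
    exact Finset.mem_range.2 (h a ha)
  have h3 : ∑ i ∈ A.image (Fin.val), 2 ^ i ≤ ∑ i ∈ Finset.range (y : ℕ), 2 ^ i :=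
    Finset.sum_le_sum_of_subset h2
  rw [h1]
  rw [sum_range_pow2] at h3
  have := Nat.one_le_two_pow (n := (y : ℕ))
  omega

lemma le_val {A : Finset (Fin N)} {y : Fin N} (h : y ∈ A) : 2 ^ (y : ℕ) ≤ val A :=
  Finset.single_le_sum (f := fun a : Fin N => 2 ^ (a : ℕ)) (fun _ _ => Nat.zero_le _) h

lemma val_lt_of_mem {A B : Finset (Fin N)} {y : Fin N} (hy : y ∈ B) (h : ∀ a ∈ A, a < y) :
    val A < val B := lt_of_lt_of_le (val_lt h) (le_val hy)

lemma eq_empty_of_val_le_zero {A : Finset (Fin N)} (h : val A ≤ 0) : A = ∅ := by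
  by_contra hne
  obtain ⟨a, ha⟩ := Finset.nonempty_iff_ne_empty.2 hne
  have := le_val ha
  have := Nat.one_le_two_pow (n := (a : ℕ))
  omega

end Val

section Interval
variable {N n : ℕ} {c : Finset (Fin N) → Bool}

lemma aux_blue {A D : Finset (Fin N)} (hAD : A ⊆ D) (hcard : n + 2 ≤ (D \ A).card)
    {u v : Fin N} (hu : u ∈ D \ A) (hv : v ∈ D \ A) (huv : u ≠ v)
    (P : ∀ E, A ⊆ E → E ⊆ D → c E = true → v ∈ E → u ∈ E) : HasBlueCopy n N c := by
  classical
  set s := ((D \ A).erase u).erase v with hsdef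
  have hvs : v ∈ (D \ A).erase u := Finset.mem_erase.2 ⟨huv.symm, hv⟩
  have hs : n ≤ s.card := by
    rw [hsdef, Finset.card_erase_of_mem hvs, Finset.card_erase_of_mem hu]
    omega
  obtain ⟨t, hts, htc⟩ := Finset.exists_subset_card_eq hs
  set e := t.orderEmbOfFin htc with hedef
  set f : Finset (Fin n) → Finset (Fin N) :=
    fun S => (A ∪ {v}) ∪ S.map e.toEmbedding with hf
  have hmem_t : ∀ (S : Finset (Fin n)) (y : Fin N), y ∈ S.map e.toEmbedding → y ∈ t := by
    intro S y hy
    rw [Finset.mem_map] at hy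
    obtain ⟨i, _, rfl⟩ := hy
    exact Finset.orderEmbOfFin_mem t htc i
  have hmem_s : ∀ (S : Finset (Fin n)) (y : Fin N), y ∈ S.map e.toEmbedding → y ∈ s :=
    fun S y hy => hts (hmem_t S y hy)
  have hiff : ∀ S T : Finset (Fin n), S ⊆ T ↔ f S ⊆ f T := by
    intro S T
    constructor
    · intro h
      simp only [hf]
      exact Finset.union_subset_union subset_rfl (Finset.map_subset_map.2 h)
    · intro h
      rw [← Finset.map_subset_map (f := e.toEmbedding)]
      intro y hy
      have hyf : y ∈ f T := h (by simp only [hf]; exact Finset.mem_union_right _ hy)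
      have hys := hmem_s S y hy
      rw [hsdef] at hys
      have hyv : y ≠ v := (Finset.mem_erase.1 hys).1
      have hyu : y ∈ (D \ A).erase u := (Finset.mem_erase.1 hys).2
      have hyA : y ∉ A := (Finset.mem_sdiff.1 (Finset.mem_erase.1 hyu).2).2
      simp only [hf, Finset.mem_union, Finset.mem_singleton] at hyf
      rcases hyf with (hc | hc) | hc
      · exact absurd hc hyA
      · exact absurd hc hyv
      · exact hc
  refine ⟨f, inj_of_iff hiff, hiff, ?_⟩
  intro S
  by_contra hred
  have hred' : c (f S) = true := by
    cases hb : c (f S)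
    · exact absurd hb hred
    · rfl
  have hsubD : f S ⊆ D := by
    simp only [hf]
    refine Finset.union_subset (Finset.union_subset hAD ?_) ?_
    · intro y hy
      rw [Finset.mem_singleton] at hy
      subst hy
      exact (Finset.mem_sdiff.1 hv).1
    · intro y hy
      have hys := hmem_s S y hy
      rw [hsdef] at hys
      exact (Finset.mem_sdiff.1 (Finset.mem_erase.1 (Finset.mem_erase.1 hys).2).2).1
  have hsupA : A ⊆ f S := by
    simp only [hf]
    exact (Finset.subset_union_left).trans Finset.subset_union_left
  have hvf : v ∈ f S := by
    simp only [hf]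
    exact Finset.mem_union_left _ (Finset.mem_union_right _ (Finset.mem_singleton_self v))
  have huf : u ∈ f S := P (f S) hsupA hsubD hred' hvf
  simp only [hf, Finset.mem_union, Finset.mem_singleton] at huf
  rcases huf with (hc | hc) | hc
  · exact (Finset.mem_sdiff.1 hu).2 hc
  · exact huv hc
  · have hys := hmem_s S u hc
    rw [hsdef] at hys
    exact (Finset.mem_erase.1 (Finset.mem_erase.1 hys).2).1 rfl

/-- If `A ⊆ D` are both red and far apart, and there is no red `Q₂`,
then there is a blue copy of `Q_n`. -/
lemma blue_of_far_reds {A D : Finset (Fin N)} (hnored : ¬ HasRedCopy 2 N c)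
    (hAD : A ⊆ D) (hcard : n + 2 ≤ (D \ A).card)
    (rA : c A = true) (rD : c D = true) : HasBlueCopy n N c := by
  classical
  have hchain : ∀ E E', A ⊆ E → E ⊆ D → c E = true → A ⊆ E' → E' ⊆ D → c E' = true →
      E ⊆ E' ∨ E' ⊆ E := by
    intro E E' hAE hED hrE hAE' hE'D hrE'
    by_contra hcon
    push_neg at hcon
    exact hnored (mkRedQ2 hAE hAE' hED hE'D hcon.1 hcon.2 rA hrE hrE' rD)
  have h2 : 1 < (D \ A).card := by omega
  rw [Finset.one_lt_card] at h2
  obtain ⟨u, hu, v, hv, huv⟩ := h2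
  by_cases hP : ∀ E, A ⊆ E → E ⊆ D → c E = true → v ∈ E → u ∈ E
  · exact aux_blue hAD hcard hu hv huv hP
  · push_neg at hP
    obtain ⟨E₀, hAE₀, hE₀D, hrE₀, hvE₀, huE₀⟩ := hP
    refine aux_blue hAD hcard hv hu huv.symm ?_
    intro E hAE hED hrE huE
    by_contra hvE
    rcases hchain E E₀ hAE hED hrE hAE₀ hE₀D hrE₀ with hc | hc
    · exact huE₀ (hc huE)
    · exact hvE (hc hvE₀)

end Interval

section Scheme
variable {N : ℕ} (c : Finset (Fin N) → Bool) (Y : Finset (Fin N))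

def cand (S F : Finset (Fin N)) : Finset (Finset (Fin N)) :=
  (Y \ F).powerset.filter (fun B => c ((S ∪ F) ∪ B) = false)

noncomputable def pick (S F : Finset (Fin N)) : Finset (Fin N) :=
  if h : (cand c Y S F).Nonempty then (Finset.exists_min_image (cand c Y S F) val h).choose
  else ∅

lemma pick_mem {S F : Finset (Fin N)} (h : (cand c Y S F).Nonempty) :
    pick c Y S F ∈ cand c Y S F := by
  rw [pick, dif_pos h]
  exact (Finset.exists_min_image (cand c Y S F) val h).choose_spec.1

lemma pick_min {S F : Finset (Fin N)} (h : (cand c Y S F).Nonempty) :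
    ∀ B ∈ cand c Y S F, val (pick c Y S F) ≤ val B := by
  rw [pick, dif_pos h]
  exact (Finset.exists_min_image (cand c Y S F) val h).choose_spec.2

lemma pick_subset (S F : Finset (Fin N)) : pick c Y S F ⊆ Y \ F := by
  by_cases h : (cand c Y S F).Nonempty
  · exact Finset.mem_powerset.1 (Finset.mem_filter.1 (pick_mem c Y h)).1
  · rw [pick, dif_neg h]
    exact Finset.empty_subset _

lemma pick_blue {S F : Finset (Fin N)} (h : (cand c Y S F).Nonempty) :
    c ((S ∪ F) ∪ pick c Y S F) = false := (Finset.mem_filter.1 (pick_mem c Y h)).2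

lemma pick_nonempty_of_ne {S F : Finset (Fin N)} (h : pick c Y S F ≠ ∅) :
    (cand c Y S F).Nonempty := by
  by_contra hne
  rw [pick, dif_neg hne] at h
  exact h rfl

lemma center_red_of_pick_ne {S F : Finset (Fin N)} (h : pick c Y S F ≠ ∅) :
    c (S ∪ F) = true := by
  have hne := pick_nonempty_of_ne c Y h
  cases hc : c (S ∪ F) with
  | false =>
    have h0 : (∅ : Finset (Fin N)) ∈ cand c Y S F := by
      refine Finset.mem_filter.2 ⟨Finset.mem_powerset.2 (Finset.empty_subset _), ?_⟩
      rw [Finset.union_empty]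
      exact hc
    have hle := pick_min c Y hne ∅ h0
    have : val (∅ : Finset (Fin N)) = 0 := by simp [val]
    exact absurd (eq_empty_of_val_le_zero (by omega)) h
  | true => rfl

noncomputable def G : Finset (Fin N) → Finset (Fin N) := fun S =>
  (S.attach.biUnion fun x => G (S.erase x.1)) ∪
    pick c Y S (S.attach.biUnion fun x => G (S.erase x.1))
termination_by S => S.card
decreasing_by all_goals exact Finset.card_erase_lt_of_mem x.2

noncomputable def FF (S : Finset (Fin N)) : Finset (Fin N) :=
  S.attach.biUnion fun x => G c Y (S.erase x.1)

lemma G_eq (S : Finset (Fin N)) : G c Y S = FF c Y S ∪ pick c Y S (FF c Y S) := by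
  rw [_root_.RQ2.G.eq_def]; rfl

lemma mem_FF {S : Finset (Fin N)} {y : Fin N} :
    y ∈ FF c Y S ↔ ∃ x ∈ S, y ∈ G c Y (S.erase x) := by
  constructor
  · intro hy
    obtain ⟨x, _, hyx⟩ := Finset.mem_biUnion.1 hy
    exact ⟨x.1, x.2, hyx⟩
  · intro ⟨x, hx, hyx⟩
    exact Finset.mem_biUnion.2 ⟨⟨x, hx⟩, Finset.mem_attach _ _, hyx⟩

lemma G_subset_Y : ∀ S : Finset (Fin N), G c Y S ⊆ Y := by
  intro S
  induction S using Finset.strongInductionOn with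
  | _ S ih =>
    rw [G_eq]
    apply Finset.union_subset
    · intro y hy
      obtain ⟨x, hx, hyG⟩ := (mem_FF c Y).1 hy
      exact ih _ (Finset.erase_ssubset hx) hyG
    · exact (pick_subset c Y _ _).trans Finset.sdiff_subset

lemma FF_subset_Y (S : Finset (Fin N)) : FF c Y S ⊆ Y := by
  intro y hy
  obtain ⟨x, hx, hyG⟩ := (mem_FF c Y).1 hy
  exact G_subset_Y c Y _ hyG

lemma G_mono : ∀ T S : Finset (Fin N), S ⊆ T → G c Y S ⊆ G c Y T := by
  intro T
  induction T using Finset.strongInductionOn with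
  | _ T ih =>
    intro S hST
    by_cases heq : S = T
    · subst heq; exact subset_rfl
    · obtain ⟨x, hxT, hxS⟩ := Finset.exists_of_ssubset (ssubset_of_subset_of_ne hST heq)
      have h1 : S ⊆ T.erase x := Finset.subset_erase.2 ⟨hST, hxS⟩
      have h2 : G c Y S ⊆ G c Y (T.erase x) := ih _ (Finset.erase_ssubset hxT) _ h1
      refine h2.trans ?_
      rw [G_eq c Y T]
      intro y hy
      exact Finset.mem_union_left _ ((mem_FF c Y).2 ⟨x, hxT, hy⟩)

lemma exists_pick_of_mem_G : ∀ S : Finset (Fin N), ∀ y : Fin N, y ∈ G c Y S →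
    ∃ V, V ⊆ S ∧ y ∈ pick c Y V (FF c Y V) := by
  intro S
  induction S using Finset.strongInductionOn with
  | _ S ih =>
    intro y hy
    rw [G_eq] at hy
    rcases Finset.mem_union.1 hy with hy | hy
    · obtain ⟨x, hx, hyG⟩ := (mem_FF c Y).1 hy
      obtain ⟨V, hVS, hyp⟩ := ih _ (Finset.erase_ssubset hx) y hyG
      exact ⟨V, hVS.trans (Finset.erase_subset _ _), hyp⟩
    · exact ⟨S, subset_rfl, hy⟩

end Scheme

section Core
variable {N : ℕ} {c : Finset (Fin N) → Bool} {Y : Finset (Fin N)}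

/-- key property of the minimal choice: at most one element of `Y \ F V` below any
element of the chosen set. -/
lemma prefix_property (hnored : ¬ HasRedCopy 2 N c) {V : Finset (Fin N)}
    (hdisj : Disjoint V Y) {y : Fin N} (hy : y ∈ pick c Y V (FF c Y V)) :
    ((Y \ FF c Y V).filter (· < y)).card ≤ 1 := by
  classical
  set F := FF c Y V with hF
  by_contra hcon
  push_neg at hcon
  rw [Finset.one_lt_card] at hcon
  obtain ⟨a, ha, b, hb, hab⟩ := hcon
  have haY : a ∈ Y \ F := (Finset.mem_filter.1 ha).1
  have hbY : b ∈ Y \ F := (Finset.mem_filter.1 hb).1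
  have hay : a < y := (Finset.mem_filter.1 ha).2
  have hby : b < y := (Finset.mem_filter.1 hb).2
  have hpne : pick c Y V F ≠ ∅ := by
    intro h
    rw [h] at hy
    exact absurd hy (Finset.notMem_empty y)
  have hne := pick_nonempty_of_ne c Y hpne
  have hmin := pick_min c Y hne
  -- any small candidate must be red
  have hredsmall : ∀ B : Finset (Fin N), B ⊆ Y \ F → (∀ z ∈ B, z < y) →
      c ((V ∪ F) ∪ B) = true := by
    intro B hBsub hBlt
    cases hcB : c ((V ∪ F) ∪ B) with
    | false =>
      have hBc : B ∈ cand c Y V F :=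
        Finset.mem_filter.2 ⟨Finset.mem_powerset.2 hBsub, hcB⟩
      have := hmin B hBc
      have hlt : val B < val (pick c Y V F) := val_lt_of_mem hy hBlt
      omega
    | true => rfl
  have hared : c ((V ∪ F) ∪ {a}) = true := by
    refine hredsmall {a} ?_ ?_
    · intro z hz; rw [Finset.mem_singleton] at hz; subst hz; exact haY
    · intro z hz; rw [Finset.mem_singleton] at hz; subst hz; exact hay
  have hbred : c ((V ∪ F) ∪ {b}) = true := by
    refine hredsmall {b} ?_ ?_
    · intro z hz; rw [Finset.mem_singleton] at hz; subst hz; exact hbY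
    · intro z hz; rw [Finset.mem_singleton] at hz; subst hz; exact hby
  have habred : c ((V ∪ F) ∪ {a, b}) = true := by
    refine hredsmall {a, b} ?_ ?_
    · intro z hz
      rcases Finset.mem_insert.1 hz with hz | hz
      · subst hz; exact haY
      · rw [Finset.mem_singleton] at hz; subst hz; exact hbY
    · intro z hz
      rcases Finset.mem_insert.1 hz with hz | hz
      · subst hz; exact hay
      · rw [Finset.mem_singleton] at hz; subst hz; exact hby
  have h0red : c (V ∪ F) = true := center_red_of_pick_ne c Y hpne
  -- a, b are not in V ∪ F
  have hanot : a ∉ V ∪ F := by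
    intro h
    rcases Finset.mem_union.1 h with h | h
    · exact (Finset.disjoint_left.1 hdisj h) (Finset.mem_sdiff.1 haY).1
    · exact (Finset.mem_sdiff.1 haY).2 h
  have hbnot : b ∉ V ∪ F := by
    intro h
    rcases Finset.mem_union.1 h with h | h
    · exact (Finset.disjoint_left.1 hdisj h) (Finset.mem_sdiff.1 hbY).1
    · exact (Finset.mem_sdiff.1 hbY).2 h
  refine hnored (mkRedQ2 (A := V ∪ F) (B := (V ∪ F) ∪ {a}) (C := (V ∪ F) ∪ {b})
    (D := (V ∪ F) ∪ {a, b}) Finset.subset_union_left Finset.subset_union_left ?_ ?_ ?_ ?_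
    h0red hared hbred habred)
  · refine Finset.union_subset_union subset_rfl ?_
    intro z hz; rw [Finset.mem_singleton] at hz; subst hz
    exact Finset.mem_insert_self _ _
  · refine Finset.union_subset_union subset_rfl ?_
    intro z hz; rw [Finset.mem_singleton] at hz; subst hz
    exact Finset.mem_insert_of_mem (Finset.mem_singleton_self _)
  · intro h
    have : a ∈ (V ∪ F) ∪ {b} := h (Finset.mem_union_right _ (Finset.mem_singleton_self a))
    rcases Finset.mem_union.1 this with h' | h'
    · exact hanot h'
    · rw [Finset.mem_singleton] at h'; exact hab h'
  · intro h
    have : b ∈ (V ∪ F) ∪ {a} := h (Finset.mem_union_right _ (Finset.mem_singleton_self b))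
    rcases Finset.mem_union.1 this with h' | h'
    · exact hbnot h'
    · rw [Finset.mem_singleton] at h'; exact hab h'.symm

lemma not_stuck (hnored : ¬ HasRedCopy 2 N c) {S : Finset (Fin N)}
    (hdisj : Disjoint S Y) (hbig : 2 ≤ (Y \ FF c Y S).card) :
    (cand c Y S (FF c Y S)).Nonempty := by
  classical
  set F := FF c Y S with hF
  by_contra hne
  have hred : ∀ B : Finset (Fin N), B ⊆ Y \ F → c ((S ∪ F) ∪ B) = true := by
    intro B hB
    cases hcB : c ((S ∪ F) ∪ B) with
    | false =>
      exact absurd ⟨B, Finset.mem_filter.2 ⟨Finset.mem_powerset.2 hB, hcB⟩⟩ hne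
    | true => rfl
  obtain ⟨a, ha, b, hb, hab⟩ := Finset.one_lt_card.1 hbig
  have hanot : a ∉ S ∪ F := by
    intro h
    rcases Finset.mem_union.1 h with h | h
    · exact (Finset.disjoint_left.1 hdisj h) (Finset.mem_sdiff.1 ha).1
    · exact (Finset.mem_sdiff.1 ha).2 h
  have hbnot : b ∉ S ∪ F := by
    intro h
    rcases Finset.mem_union.1 h with h | h
    · exact (Finset.disjoint_left.1 hdisj h) (Finset.mem_sdiff.1 hb).1
    · exact (Finset.mem_sdiff.1 hb).2 h
  have hsub_a : ({a} : Finset (Fin N)) ⊆ Y \ F := by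
    intro z hz; rw [Finset.mem_singleton] at hz; subst hz; exact ha
  have hsub_b : ({b} : Finset (Fin N)) ⊆ Y \ F := by
    intro z hz; rw [Finset.mem_singleton] at hz; subst hz; exact hb
  have hsub_ab : ({a, b} : Finset (Fin N)) ⊆ Y \ F := by
    intro z hz
    rcases Finset.mem_insert.1 hz with hz | hz
    · subst hz; exact ha
    · rw [Finset.mem_singleton] at hz; subst hz; exact hb
  have h0 : c (S ∪ F) = true := by
    have := hred ∅ (Finset.empty_subset _)
    rwa [Finset.union_empty] at this
  refine hnored (mkRedQ2 (A := S ∪ F) (B := (S ∪ F) ∪ {a}) (C := (S ∪ F) ∪ {b})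
    (D := (S ∪ F) ∪ {a, b}) Finset.subset_union_left Finset.subset_union_left ?_ ?_ ?_ ?_
    h0 (hred _ hsub_a) (hred _ hsub_b) (hred _ hsub_ab))
  · refine Finset.union_subset_union subset_rfl ?_
    intro z hz; rw [Finset.mem_singleton] at hz; subst hz
    exact Finset.mem_insert_self _ _
  · refine Finset.union_subset_union subset_rfl ?_
    intro z hz; rw [Finset.mem_singleton] at hz; subst hz
    exact Finset.mem_insert_of_mem (Finset.mem_singleton_self _)
  · intro h
    have : a ∈ (S ∪ F) ∪ {b} := h (Finset.mem_union_right _ (Finset.mem_singleton_self a))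
    rcases Finset.mem_union.1 this with h' | h'
    · exact hanot h'
    · rw [Finset.mem_singleton] at h'; exact hab h'
  · intro h
    have : b ∈ (S ∪ F) ∪ {a} := h (Finset.mem_union_right _ (Finset.mem_singleton_self b))
    rcases Finset.mem_union.1 this with h' | h'
    · exact hbnot h'
    · rw [Finset.mem_singleton] at h'; exact hab h'.symm

/-- The descent lemma: from a red "center" we can descend to a small red set far below. -/
lemma descent (hnored : ¬ HasRedCopy 2 N c) :
    ∀ T : Finset (Fin N), Disjoint T Y → c (T ∪ FF c Y T) = true →
    ∃ M, M ⊆ T ∧ FF c Y M = ∅ ∧ c M = true ∧ (FF c Y T).card ≤ 2 * (T.card - M.card) := by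
  intro T
  induction T using Finset.strongInductionOn with
  | _ T ih =>
    intro hdisj hred
    by_cases hFe : FF c Y T = ∅
    · refine ⟨T, subset_rfl, hFe, ?_, by simp [hFe]⟩
      rwa [hFe, Finset.union_empty] at hred
    · have hFne : (FF c Y T).Nonempty := Finset.nonempty_iff_ne_empty.2 hFe
      set y := (FF c Y T).max' hFne with hy
      have hymem : y ∈ FF c Y T := Finset.max'_mem _ hFne
      obtain ⟨x, hxT, hyG⟩ := (mem_FF c Y).1 hymem
      obtain ⟨V, hVsub, hypick⟩ := exists_pick_of_mem_G c Y (T.erase x) y hyG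
      have hVT : V ⊂ T := Finset.ssubset_of_subset_of_ssubset hVsub (Finset.erase_ssubset hxT)
      have hVdisj : Disjoint V Y := hdisj.mono_left (le_of_lt hVT)
      have hpne : pick c Y V (FF c Y V) ≠ ∅ := by
        intro h
        rw [h] at hypick
        exact absurd hypick (Finset.notMem_empty y)
      have hVred : c (V ∪ FF c Y V) = true := center_red_of_pick_ne c Y hpne
      obtain ⟨M, hMV, hMF, hMred, hMcard⟩ := ih V hVT hVdisj hVred
      refine ⟨M, hMV.trans hVT.subset, hMF, hMred, ?_⟩
      have hprefix := prefix_property hnored hVdisj hypick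
      have hsub1 : FF c Y T ⊆ (Y.filter (· < y)) ∪ {y} := by
        intro z hz
        have hzY : z ∈ Y := FF_subset_Y c Y T hz
        rcases lt_or_eq_of_le (Finset.le_max' _ z hz) with h | h
        · exact Finset.mem_union_left _ (Finset.mem_filter.2 ⟨hzY, h⟩)
        · exact Finset.mem_union_right _ (Finset.mem_singleton.2 h)
      have hc1 : (FF c Y T).card ≤ (Y.filter (· < y)).card + 1 := by
        refine le_trans (Finset.card_le_card hsub1) ?_
        refine le_trans (Finset.card_union_le _ _) ?_
        simp
      have hsub2 : (Y.filter (· < y)) \ FF c Y V ⊆ (Y \ FF c Y V).filter (· < y) := by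
        intro z hz
        have h1 := Finset.mem_sdiff.1 hz
        have h2 := Finset.mem_filter.1 h1.1
        exact Finset.mem_filter.2 ⟨Finset.mem_sdiff.2 ⟨h2.1, h1.2⟩, h2.2⟩
      have hc2 : ((Y.filter (· < y)) \ FF c Y V).card ≤ 1 :=
        le_trans (Finset.card_le_card hsub2) hprefix
      have hc3 : (Y.filter (· < y)).card ≤ (FF c Y V).card + 1 := by
        have h4 := Finset.card_inter_add_card_sdiff (Y.filter (· < y)) (FF c Y V)
        have hint : ((Y.filter (· < y)) ∩ FF c Y V).card ≤ (FF c Y V).card :=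
          Finset.card_le_card Finset.inter_subset_right
        omega
      have hVT' : V.card < T.card := Finset.card_lt_card hVT
      have hMV' : M.card ≤ V.card := Finset.card_le_card hMV
      omega

end Core

theorem main (n N : ℕ) (hn : 1 ≤ n) (hN : 3 * N ≥ 5 * n + 6)
    (c : Finset (Fin N) → Bool) :
    HasRedCopy 2 N c ∨ HasBlueCopy n N c := by
  classical
  by_cases hR : HasRedCopy 2 N c
  · exact Or.inl hR
  right
  have hnN : n ≤ N := by omega
  set emb : Fin n ↪ Fin N := Fin.castLEEmb hnN with hemb
  set X : Finset (Fin N) := Finset.univ.map emb with hX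
  set Y : Finset (Fin N) := Xᶜ with hY
  have hXcard : X.card = n := by simp [hX]
  have hYcard : Y.card = N - n := by
    rw [hY, Finset.card_compl, hXcard]
    simp
  have hYmem : ∀ z, z ∈ Y → z ∉ X := by
    intro z hz
    rw [hY] at hz
    exact Finset.mem_compl.1 hz
  have hdisjX : ∀ S : Finset (Fin N), S ⊆ X → Disjoint S Y := by
    intro S hS
    refine Finset.disjoint_left.2 ?_
    intro z hzS hzY
    exact hYmem z hzY (hS hzS)
  by_cases hok : ∀ S : Finset (Fin N), S ⊆ X → (cand c Y S (FF c Y S)).Nonempty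
  · set f : Finset (Fin n) → Finset (Fin N) := fun S => (S.map emb) ∪ G c Y (S.map emb) with hf
    have hmapX : ∀ S : Finset (Fin n), S.map emb ⊆ X := by
      intro S
      rw [hX]
      exact Finset.map_subset_map.2 (Finset.subset_univ S)
    have hiff : ∀ S T, S ⊆ T ↔ f S ⊆ f T := by
      intro S T
      constructor
      · intro h
        simp only [hf]
        exact Finset.union_subset_union (Finset.map_subset_map.2 h)
          (G_mono c Y _ _ (Finset.map_subset_map.2 h))
      · intro h
        rw [← Finset.map_subset_map (f := emb)]
        intro z hz
        have hzf : z ∈ f T := h (by simp only [hf]; exact Finset.mem_union_left _ hz)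
        simp only [hf, Finset.mem_union] at hzf
        rcases hzf with h' | h'
        · exact h'
        · exact absurd (hmapX S hz) (hYmem z (G_subset_Y c Y _ h'))
    refine ⟨f, inj_of_iff hiff, hiff, ?_⟩
    intro S
    have hne := hok (S.map emb) (hmapX S)
    have hblue := pick_blue c Y hne
    have heq : f S = ((S.map emb) ∪ FF c Y (S.map emb)) ∪
        pick c Y (S.map emb) (FF c Y (S.map emb)) := by
      simp only [hf]
      rw [G_eq, Finset.union_assoc]
    rw [heq]
    exact hblue
  · push_neg at hok
    obtain ⟨S₀, hS₀X, hS₀ne⟩ := hok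
    rw [← Finset.not_nonempty_iff_eq_empty] at hS₀ne
    have hdisj₀ := hdisjX S₀ hS₀X
    have hF₀Y : FF c Y S₀ ⊆ Y := FF_subset_Y c Y S₀
    have hsmall : (Y \ FF c Y S₀).card ≤ 1 := by
      by_contra h
      push_neg at h
      exact hS₀ne (not_stuck hR hdisj₀ (by omega))
    have hcred : c (S₀ ∪ FF c Y S₀) = true := by
      cases hc : c (S₀ ∪ FF c Y S₀) with
      | false =>
        refine absurd ⟨∅, Finset.mem_filter.2 ⟨Finset.mem_powerset.2 (Finset.empty_subset _), ?_⟩⟩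
          hS₀ne
        rwa [Finset.union_empty]
      | true => rfl
    obtain ⟨M, hMS, hMF, hMred, hMcard⟩ := descent hR S₀ hdisj₀ hcred
    have hsd : (Y \ FF c Y S₀).card = Y.card - (FF c Y S₀).card := Finset.card_sdiff_of_subset hF₀Y
    have hF₀le : (FF c Y S₀).card ≤ Y.card := Finset.card_le_card hF₀Y
    have hMX : M ⊆ X := hMS.trans hS₀X
    have hMD : M ⊆ S₀ ∪ FF c Y S₀ := hMS.trans Finset.subset_union_left
    have hdisjSF : Disjoint (S₀ \ M) (FF c Y S₀) := by
      refine Finset.disjoint_left.2 ?_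
      intro z hz hzF
      exact hYmem z (hF₀Y hzF) (hS₀X (Finset.mem_sdiff.1 hz).1)
    have hset : (S₀ ∪ FF c Y S₀) \ M = (S₀ \ M) ∪ FF c Y S₀ := by
      ext z
      simp only [Finset.mem_sdiff, Finset.mem_union]
      constructor
      · rintro ⟨h1 | h1, h2⟩
        · exact Or.inl ⟨h1, h2⟩
        · exact Or.inr h1
      · rintro (⟨h1, h2⟩ | h1)
        · exact ⟨Or.inl h1, h2⟩
        · exact ⟨Or.inr h1, fun hzM => hYmem z (hF₀Y h1) (hMX hzM)⟩
    have hcard1 : ((S₀ ∪ FF c Y S₀) \ M).card = (S₀.card - M.card) + (FF c Y S₀).card := by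
      rw [hset, Finset.card_union_of_disjoint hdisjSF, Finset.card_sdiff_of_subset hMS]
    have hMle : M.card ≤ S₀.card := Finset.card_le_card hMS
    refine blue_of_far_reds hR hMD ?_ hMred hcred
    omega

end RQ2


/-- If n ≥ 1 and 3N ≥ 5n + 6, every 2-coloring of Q_N contains a red copy
of Q_2 or a blue copy of Q_n, i.e. R(Q_2, Q_n) ≤ (5/3)n + 2. -/
theorem ramsey_Q2_Qn (n N : ℕ) (hn : 1 ≤ n) (hN : 3 * N ≥ 5 * n + 6)
    (c : Finset (Fin N) → Bool) :
    HasRedCopy 2 N c ∨ HasBlueCopy n N c := by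
  exact RQ2.main n N hn hN c
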